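/- Let $(R,\mathfrak{m})$ be a local Artin ring with residue field $k$ and let $F_1 \subseteq F$ be two finitely generated free $R$-modules. Then the quotient $F/F_1$ is a free $R$-module. -/

import Mathlib

open IsLocalRing TensorProduct

-- socle element
lemma socle_exists (R : Type*) [CommRing R] [IsLocalRing R] [IsArtinianRing R] :
    ∃ c : R, c ≠ 0 ∧ ∀ m ∈ maximalIdeal R, c * m = 0 := by
  have hnil : IsNilpotent (maximalIdeal R) := by
    have := IsArtinianRing.isNilpotent_jacobson_bot (R := R)
    rwa [jacobson_eq_maximalIdeal (⊥ : Ideal R) bot_ne_top] at this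
  obtain ⟨n, hn⟩ := hnil
  -- find minimal j with 𝔪^j = 0
  have hR : (1 : R) ≠ 0 := one_ne_zero
  have h0 : (maximalIdeal R) ^ 0 ≠ 0 := by
    simp only [pow_zero, Ideal.one_eq_top]
    intro h
    exact hR (by simpa using (Submodule.eq_bot_iff _).mp h 1 trivial)
  classical
  obtain ⟨j, hj1, hj2⟩ : ∃ j, (maximalIdeal R) ^ (j+1) = 0 ∧ (maximalIdeal R) ^ j ≠ 0 := by
    by_contra h
    push_neg at h
    have : ∀ j, (maximalIdeal R) ^ j ≠ 0 := by
      intro j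
      induction j with
      | zero => exact h0
      | succ m ih => intro hc; exact ih (h m hc)
    exact this n hn
  obtain ⟨c, hc, hc0⟩ : ∃ c ∈ (maximalIdeal R) ^ j, c ≠ 0 := by
    by_contra h
    push_neg at h
    exact hj2 ((Submodule.eq_bot_iff _).mpr h)
  refine ⟨c, hc0, fun m hm => ?_⟩
  have : c * m ∈ (maximalIdeal R) ^ (j + 1) := by
    rw [pow_succ]
    exact Ideal.mul_mem_mul hc hm
  rw [hj1] at this
  simpa using this

lemma key_mem (R : Type*) [CommRing R] [IsLocalRing R] [IsArtinianRing R]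
    (F : Type*) [AddCommGroup F] [Module R F]
    (F₁ : Submodule R F) [Module.Finite R F₁] [Module.Free R F₁]
    (x : F₁) (hx : (x : F) ∈ (maximalIdeal R • ⊤ : Submodule R F)) :
    x ∈ (maximalIdeal R • ⊤ : Submodule R F₁) := by
  obtain ⟨c, hc0, hc⟩ := socle_exists R
  have hcx : c • (x : F) = 0 := by
    refine Submodule.smul_induction_on hx (fun r hr y _ => ?_) (fun y z hy hz => ?_)
    · rw [smul_smul, hc r hr, zero_smul]
    · rw [smul_add, hy, hz, add_zero]
  have hcx' : c • x = 0 := Subtype.ext (by simpa using hcx)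
  let b := Module.Free.chooseBasis R F₁
  have hrep : ∀ i, c * b.repr x i = 0 := by
    intro i
    have : b.repr (c • x) = c • b.repr x := map_smul _ _ _
    rw [hcx'] at this
    have := congrFun (congrArg DFunLike.coe this.symm) i
    simpa using this
  have hmem : ∀ i, b.repr x i ∈ maximalIdeal R := by
    intro i
    by_contra h
    have hu : IsUnit (b.repr x i) := not_not.mp h
    exact hc0 (by
      have := hrep i
      obtain ⟨u, hu⟩ := hu
      calc c = c * (b.repr x i) * (↑u⁻¹ : Rˣ) := by
              rw [← hu, mul_assoc, Units.mul_inv, mul_one]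
        _ = 0 := by rw [this, zero_mul])
  have := b.sum_repr x
  rw [← this]
  exact Submodule.sum_mem _ fun i _ =>
    Submodule.smul_mem_smul (hmem i) trivial

/-- **Lemma.** Let `(R, 𝔪)` be a local Artin ring and `F₁ ⊆ F` two finitely generated free
`R`-modules. Then `F/F₁` is a free `R`-module. -/
theorem quotient_of_free_submodule_free
    (R : Type*) [CommRing R] [IsLocalRing R] [IsArtinianRing R]
    (F : Type*) [AddCommGroup F] [Module R F] [Module.Finite R F] [Module.Free R F]
    (F₁ : Submodule R F) [Module.Finite R F₁] [Module.Free R F₁] :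
    Module.Free R (F ⧸ F₁) := by
  have hinj : Function.Injective ((F₁.subtype).lTensor (ResidueField R)) := by
    rw [injective_iff_map_eq_zero]
    intro z hz
    let e₁ := TensorProduct.quotTensorEquivQuotSMul F₁ (maximalIdeal R)
    let e₂ := TensorProduct.quotTensorEquivQuotSMul F (maximalIdeal R)
    obtain ⟨x', hx'⟩ := Submodule.Quotient.mk_surjective _ (e₁ z)
    have hz1 : z = (1 : ResidueField R) ⊗ₜ[R] x' := by
      rw [show (1 : ResidueField R) ⊗ₜ[R] x' = e₁.symm (Submodule.Quotient.mk x') from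
        (TensorProduct.quotTensorEquivQuotSMul_symm_mk _ _).symm, hx']
      exact (e₁.symm_apply_apply z).symm
    have h2 : ((F₁.subtype).lTensor (ResidueField R)) z
        = (1 : ResidueField R) ⊗ₜ[R] (x' : F) := by
      rw [hz1]; rfl
    have h3 : Submodule.Quotient.mk (p := (maximalIdeal R • ⊤ : Submodule R F)) (x' : F) = 0 := by
      have : e₂.symm (Submodule.Quotient.mk (x' : F)) = 0 := by
        rw [TensorProduct.quotTensorEquivQuotSMul_symm_mk]; exact h2.symm.trans hz
      simpa using congrArg e₂ this
    have h4 : (x' : F) ∈ (maximalIdeal R • ⊤ : Submodule R F) :=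
      (Submodule.Quotient.mk_eq_zero _).mp h3
    have h5 : x' ∈ (maximalIdeal R • ⊤ : Submodule R F₁) := key_mem R F F₁ x' h4
    have : e₁ z = 0 := by rw [← hx', Submodule.Quotient.mk_eq_zero]; exact h5
    exact e₁.injective (this.trans (map_zero e₁).symm)
  exact Module.free_of_lTensor_residueField_injective F₁.subtype F₁.mkQ
    (Submodule.mkQ_surjective F₁) (LinearMap.exact_subtype_mkQ F₁) hinj
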